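/- Let t > 0, −π/3 < θ < π/3 and (θ, t) ≠ (0, 1). Suppose ρ₀(θ,t) = Σ_{i=1}^{n₁} t_{1i}|z₁(1, β_{1i}, γ_{1i})⟩⟨z₁(1, β_{1i}, γ_{1i})| + Σ_{k=2}^{4} Σ_{i=1}^{n_k} (t_{ki}/t²)|z_k(β_{ki})⟩⟨z_k(β_{ki})|, where all coefficients t_{ki} are strictly positive and all β_{ki}, γ_{1i} are complex numbers of modulus one. Then Σ_{i=1}^{n_k} t_{ki} = 1 for each k ∈ {1,2,3,4}, and Σ_{i=1}^{n₁} t_{1i}β_{1i} = Σ_{i=1}^{n₁} t_{1i}γ_{1i} = Σ_{i=1}^{n₂} t_{2i}β_{2i} = Σ_{i=1}^{n₃} t_{3i}β_{3i} = Σ_{i=1}^{n₄} t_{4i}β_{4i} = 0. Consequently n₁ ≥ 3 and n_k ≥ 2 for k = 2, 3, 4. -/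

import Mathlib

open Complex Matrix BigOperators

/-- The tensor (Kronecker) product of two vectors in `ℂ³`, as a vector in `ℂ⁹`:
the component `ξ_i η_j` sits at index `3i + j` (0-based). -/
def kron (ξ η : Fin 3 → ℂ) : Fin 9 → ℂ :=
  fun k => ξ ⟨k.val / 3, by have := k.isLt; omega⟩ * η ⟨k.val % 3, by have := k.isLt; omega⟩

/-- `z₁(a₁,a₂,a₃) = (a₁,a₂,a₃) ⊗ (ā₁,ā₂,ā₃)`. -/
noncomputable def z1 (a₁ a₂ a₃ : ℂ) : Fin 9 → ℂ :=
  kron ![a₁, a₂, a₃] ![starRingEnd ℂ a₁, starRingEnd ℂ a₂, starRingEnd ℂ a₃]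

/-- `z₂(β) = (0, √t β, 1) ⊗ (0, √t β̄, t e^{iθ})`. -/
noncomputable def z2 (t θ : ℝ) (β : ℂ) : Fin 9 → ℂ :=
  kron ![0, (Real.sqrt t : ℂ) * β, 1]
       ![0, (Real.sqrt t : ℂ) * starRingEnd ℂ β, (t : ℂ) * exp (θ * I)]

/-- `z₃(β) = (1, 0, √t β) ⊗ (t e^{iθ}, 0, √t β̄)`. -/
noncomputable def z3 (t θ : ℝ) (β : ℂ) : Fin 9 → ℂ :=
  kron ![1, 0, (Real.sqrt t : ℂ) * β]
       ![(t : ℂ) * exp (θ * I), 0, (Real.sqrt t : ℂ) * starRingEnd ℂ β]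

/-- `z₄(β) = (√t β, 1, 0) ⊗ (√t β̄, t e^{iθ}, 0)`. -/
noncomputable def z4 (t θ : ℝ) (β : ℂ) : Fin 9 → ℂ :=
  kron ![(Real.sqrt t : ℂ) * β, 1, 0]
       ![(Real.sqrt t : ℂ) * starRingEnd ℂ β, (t : ℂ) * exp (θ * I), 0]

/-- The pure (unnormalized) state `|z⟩⟨z|`. -/
noncomputable def rank1 (v : Fin 9 → ℂ) : Matrix (Fin 9) (Fin 9) ℂ :=
  vecMulVec v (star v)

/-- The separable state `ρ₀(θ,t)`. -/
noncomputable def rho0 (θ t : ℝ) : Matrix (Fin 9) (Fin 9) ℂ :=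
  !![3, 0, 0, 0, 1 + exp (-θ * I), 0, 0, 0, 1 + exp (θ * I);
     0, 1 + (t : ℂ), 0, 0, 0, 0, 0, 0, 0;
     0, 0, 1 + 1 / (t : ℂ), 0, 0, 0, 0, 0, 0;
     0, 0, 0, 1 + 1 / (t : ℂ), 0, 0, 0, 0, 0;
     1 + exp (θ * I), 0, 0, 0, 3, 0, 0, 0, 1 + exp (-θ * I);
     0, 0, 0, 0, 0, 1 + (t : ℂ), 0, 0, 0;
     0, 0, 0, 0, 0, 0, 1 + (t : ℂ), 0, 0;
     0, 0, 0, 0, 0, 0, 0, 1 + 1 / (t : ℂ), 0;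
     1 + exp (-θ * I), 0, 0, 0, 1 + exp (θ * I), 0, 0, 0, 3]

lemma aux_two (m : ℕ) (w : Fin m → ℝ) (b : Fin m → ℂ)
    (hw : ∀ i, 0 < w i) (hb : ∀ i, ‖b i‖ = 1)
    (h1 : ∑ i, w i = 1) (h0 : ∑ i, ((w i : ℝ) : ℂ) * b i = 0) : 2 ≤ m := by
  by_contra hc
  push_neg at hc
  interval_cases m
  · simp at h1
  · rw [Fin.sum_univ_one] at h0
    rcases mul_eq_zero.mp h0 with h | h
    · exact (hw 0).ne' (by exact_mod_cast h)
    · have := hb 0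
      rw [h] at this
      simp at this

lemma aux_three (m : ℕ) (w : Fin m → ℝ) (b g : Fin m → ℂ)
    (hw : ∀ i, 0 < w i) (hb : ∀ i, ‖b i‖ = 1) (hg : ∀ i, ‖g i‖ = 1)
    (h1 : ∑ i, w i = 1) (hb0 : ∑ i, ((w i : ℝ) : ℂ) * b i = 0)
    (hg0 : ∑ i, ((w i : ℝ) : ℂ) * g i = 0)
    (hm : ∑ i, ((w i : ℝ) : ℂ) * ((b i)⁻¹ * g i) = 0) : 3 ≤ m := by
  have hbn : ∀ i, b i ≠ 0 := fun i h => by have := hb i; rw [h] at this; simp at this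
  have hgn : ∀ i, g i ≠ 0 := fun i h => by have := hg i; rw [h] at this; simp at this
  by_contra hc
  push_neg at hc
  interval_cases m
  · simp at h1
  · rw [Fin.sum_univ_one] at hb0
    rcases mul_eq_zero.mp hb0 with h | h
    · exact (hw 0).ne' (by exact_mod_cast h)
    · exact hbn 0 h
  · rw [Fin.sum_univ_two] at h1 hb0 hg0 hm
    have hw0 := hw 0
    have hw0c : ((w 0 : ℝ) : ℂ) ≠ 0 := Complex.ofReal_ne_zero.2 hw0.ne'
    have hw1 := hw 1
    have e1 : ((w 0 : ℝ) : ℂ) * b 0 = -(((w 1 : ℝ) : ℂ) * b 1) := by linear_combination hb0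
    have e2 : w 0 = w 1 := by
      have habs := congrArg (‖·‖) e1
      rw [norm_neg] at habs
      simpa [norm_mul, hb 0, hb 1, abs_of_pos hw0, abs_of_pos hw1] using habs
    rw [← e2] at hb0 hg0 hm
    have e3 : b 1 = -(b 0) := by
      apply mul_left_cancel₀ hw0c
      linear_combination hb0
    rw [e3, inv_neg] at hm
    have hg01 : g 0 = g 1 := by
      have h' : ((w 0 : ℝ) : ℂ) * ((b 0)⁻¹ * (g 0 - g 1)) = 0 := by linear_combination hm
      have h'' := (mul_eq_zero.mp h').resolve_left hw0c
      have h3 := (mul_eq_zero.mp h'').resolve_left (inv_ne_zero (hbn 0))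
      exact sub_eq_zero.mp h3
    have hg02 : g 0 + g 1 = 0 := by
      have h' : ((w 0 : ℝ) : ℂ) * (g 0 + g 1) = 0 := by linear_combination hg0
      exact (mul_eq_zero.mp h').resolve_left hw0c
    exact hgn 0 (by linear_combination (hg02 + hg01) / 2)
lemma z1_a0 (a b c : ℂ) : z1 a b c 0 = (a) * (starRingEnd ℂ a) := rfl
lemma z1_a1 (a b c : ℂ) : z1 a b c 1 = (a) * (starRingEnd ℂ b) := rfl
lemma z1_a2 (a b c : ℂ) : z1 a b c 2 = (a) * (starRingEnd ℂ c) := rfl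
lemma z1_a3 (a b c : ℂ) : z1 a b c 3 = (b) * (starRingEnd ℂ a) := rfl
lemma z1_a4 (a b c : ℂ) : z1 a b c 4 = (b) * (starRingEnd ℂ b) := rfl
lemma z1_a5 (a b c : ℂ) : z1 a b c 5 = (b) * (starRingEnd ℂ c) := rfl
lemma z1_a6 (a b c : ℂ) : z1 a b c 6 = (c) * (starRingEnd ℂ a) := rfl
lemma z1_a7 (a b c : ℂ) : z1 a b c 7 = (c) * (starRingEnd ℂ b) := rfl
lemma z1_a8 (a b c : ℂ) : z1 a b c 8 = (c) * (starRingEnd ℂ c) := rfl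
lemma z2_a0 (t θ : ℝ) (β : ℂ) : z2 t θ β 0 = (0) * (0) := rfl
lemma z2_a1 (t θ : ℝ) (β : ℂ) : z2 t θ β 1 = (0) * ((Real.sqrt t : ℂ) * starRingEnd ℂ β) := rfl
lemma z2_a2 (t θ : ℝ) (β : ℂ) : z2 t θ β 2 = (0) * (((t : ℂ) * exp (θ * I))) := rfl
lemma z2_a3 (t θ : ℝ) (β : ℂ) : z2 t θ β 3 = ((Real.sqrt t : ℂ) * β) * (0) := rfl
lemma z2_a4 (t θ : ℝ) (β : ℂ) : z2 t θ β 4 = ((Real.sqrt t : ℂ) * β) * ((Real.sqrt t : ℂ) * starRingEnd ℂ β) := rfl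
lemma z2_a5 (t θ : ℝ) (β : ℂ) : z2 t θ β 5 = ((Real.sqrt t : ℂ) * β) * (((t : ℂ) * exp (θ * I))) := rfl
lemma z2_a6 (t θ : ℝ) (β : ℂ) : z2 t θ β 6 = (1) * (0) := rfl
lemma z2_a7 (t θ : ℝ) (β : ℂ) : z2 t θ β 7 = (1) * ((Real.sqrt t : ℂ) * starRingEnd ℂ β) := rfl
lemma z2_a8 (t θ : ℝ) (β : ℂ) : z2 t θ β 8 = (1) * (((t : ℂ) * exp (θ * I))) := rfl
lemma z3_a0 (t θ : ℝ) (β : ℂ) : z3 t θ β 0 = (1) * (((t : ℂ) * exp (θ * I))) := rfl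
lemma z3_a1 (t θ : ℝ) (β : ℂ) : z3 t θ β 1 = (1) * (0) := rfl
lemma z3_a2 (t θ : ℝ) (β : ℂ) : z3 t θ β 2 = (1) * ((Real.sqrt t : ℂ) * starRingEnd ℂ β) := rfl
lemma z3_a3 (t θ : ℝ) (β : ℂ) : z3 t θ β 3 = (0) * (((t : ℂ) * exp (θ * I))) := rfl
lemma z3_a4 (t θ : ℝ) (β : ℂ) : z3 t θ β 4 = (0) * (0) := rfl
lemma z3_a5 (t θ : ℝ) (β : ℂ) : z3 t θ β 5 = (0) * ((Real.sqrt t : ℂ) * starRingEnd ℂ β) := rfl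
lemma z3_a6 (t θ : ℝ) (β : ℂ) : z3 t θ β 6 = ((Real.sqrt t : ℂ) * β) * (((t : ℂ) * exp (θ * I))) := rfl
lemma z3_a7 (t θ : ℝ) (β : ℂ) : z3 t θ β 7 = ((Real.sqrt t : ℂ) * β) * (0) := rfl
lemma z3_a8 (t θ : ℝ) (β : ℂ) : z3 t θ β 8 = ((Real.sqrt t : ℂ) * β) * ((Real.sqrt t : ℂ) * starRingEnd ℂ β) := rfl
lemma z4_a0 (t θ : ℝ) (β : ℂ) : z4 t θ β 0 = ((Real.sqrt t : ℂ) * β) * ((Real.sqrt t : ℂ) * starRingEnd ℂ β) := rfl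
lemma z4_a1 (t θ : ℝ) (β : ℂ) : z4 t θ β 1 = ((Real.sqrt t : ℂ) * β) * (((t : ℂ) * exp (θ * I))) := rfl
lemma z4_a2 (t θ : ℝ) (β : ℂ) : z4 t θ β 2 = ((Real.sqrt t : ℂ) * β) * (0) := rfl
lemma z4_a3 (t θ : ℝ) (β : ℂ) : z4 t θ β 3 = (1) * ((Real.sqrt t : ℂ) * starRingEnd ℂ β) := rfl
lemma z4_a4 (t θ : ℝ) (β : ℂ) : z4 t θ β 4 = (1) * (((t : ℂ) * exp (θ * I))) := rfl
lemma z4_a5 (t θ : ℝ) (β : ℂ) : z4 t θ β 5 = (1) * (0) := rfl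
lemma z4_a6 (t θ : ℝ) (β : ℂ) : z4 t θ β 6 = (0) * ((Real.sqrt t : ℂ) * starRingEnd ℂ β) := rfl
lemma z4_a7 (t θ : ℝ) (β : ℂ) : z4 t θ β 7 = (0) * (((t : ℂ) * exp (θ * I))) := rfl
lemma z4_a8 (t θ : ℝ) (β : ℂ) : z4 t θ β 8 = (0) * (0) := rfl
lemma rank1_apply (v : Fin 9 → ℂ) (j k : Fin 9) : rank1 v j k = v j * starRingEnd ℂ (v k) := rfl
lemma rho0_00 (θ t : ℝ) : rho0 θ t 0 0 = 3 := rfl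
lemma rho0_11 (θ t : ℝ) : rho0 θ t 1 1 = 1 + (t:ℂ) := rfl
lemma rho0_22 (θ t : ℝ) : rho0 θ t 2 2 = 1 + 1/(t:ℂ) := rfl
lemma rho0_33 (θ t : ℝ) : rho0 θ t 3 3 = 1 + 1/(t:ℂ) := rfl
lemma rho0_55 (θ t : ℝ) : rho0 θ t 5 5 = 1 + (t:ℂ) := rfl
lemma rho0_66 (θ t : ℝ) : rho0 θ t 6 6 = 1 + (t:ℂ) := rfl
lemma rho0_77 (θ t : ℝ) : rho0 θ t 7 7 = 1 + 1/(t:ℂ) := rfl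
lemma rho0_01 (θ t : ℝ) : rho0 θ t 0 1 = 0 := rfl
lemma rho0_02 (θ t : ℝ) : rho0 θ t 0 2 = 0 := rfl
lemma rho0_03 (θ t : ℝ) : rho0 θ t 0 3 = 0 := rfl
lemma rho0_06 (θ t : ℝ) : rho0 θ t 0 6 = 0 := rfl
lemma rho0_12 (θ t : ℝ) : rho0 θ t 1 2 = 0 := rfl
lemma rho0_47 (θ t : ℝ) : rho0 θ t 4 7 = 0 := rfl
set_option maxHeartbeats 1000000 in

/-- Constraints forced on any decomposition of `ρ₀(θ,t)` into pure product states of the four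
admissible families: the weights in each family sum to `1`, the first moments vanish, and
`n₁ ≥ 3`, `n₂, n₃, n₄ ≥ 2`. -/
theorem rho0_decomposition_constraints (t θ : ℝ) (ht : 0 < t)
    (hθl : -(Real.pi / 3) < θ) (hθr : θ < Real.pi / 3) (hne : ¬(θ = 0 ∧ t = 1))
    (n₁ n₂ n₃ n₄ : ℕ)
    (t1 : Fin n₁ → ℝ) (β1 γ1 : Fin n₁ → ℂ)
    (t2 : Fin n₂ → ℝ) (β2 : Fin n₂ → ℂ)
    (t3 : Fin n₃ → ℝ) (β3 : Fin n₃ → ℂ)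
    (t4 : Fin n₄ → ℝ) (β4 : Fin n₄ → ℂ)
    (ht1 : ∀ i, 0 < t1 i) (ht2 : ∀ i, 0 < t2 i)
    (ht3 : ∀ i, 0 < t3 i) (ht4 : ∀ i, 0 < t4 i)
    (hβ1 : ∀ i, ‖β1 i‖ = 1) (hγ1 : ∀ i, ‖γ1 i‖ = 1)
    (hβ2 : ∀ i, ‖β2 i‖ = 1) (hβ3 : ∀ i, ‖β3 i‖ = 1)
    (hβ4 : ∀ i, ‖β4 i‖ = 1)
    (hdec : rho0 θ t =
        ∑ i : Fin n₁, (t1 i : ℂ) • rank1 (z1 1 (β1 i) (γ1 i))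
        + ∑ i : Fin n₂, ((t2 i : ℂ) / (t : ℂ) ^ 2) • rank1 (z2 t θ (β2 i))
        + ∑ i : Fin n₃, ((t3 i : ℂ) / (t : ℂ) ^ 2) • rank1 (z3 t θ (β3 i))
        + ∑ i : Fin n₄, ((t4 i : ℂ) / (t : ℂ) ^ 2) • rank1 (z4 t θ (β4 i))) :
    (∑ i, t1 i = 1) ∧ (∑ i, t2 i = 1) ∧ (∑ i, t3 i = 1) ∧ (∑ i, t4 i = 1) ∧
    (∑ i, (t1 i : ℂ) * β1 i = 0) ∧ (∑ i, (t1 i : ℂ) * γ1 i = 0) ∧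
    (∑ i, (t2 i : ℂ) * β2 i = 0) ∧ (∑ i, (t3 i : ℂ) * β3 i = 0) ∧
    (∑ i, (t4 i : ℂ) * β4 i = 0) ∧
    3 ≤ n₁ ∧ 2 ≤ n₂ ∧ 2 ≤ n₃ ∧ 2 ≤ n₄ := by
  have ht0 : (t:ℂ) ≠ 0 := Complex.ofReal_ne_zero.2 ht.ne'
  have hs0 : ((Real.sqrt t : ℝ) : ℂ) ≠ 0 := Complex.ofReal_ne_zero.2 (Real.sqrt_ne_zero'.2 ht)
  have hts : (t:ℂ) = ((Real.sqrt t : ℝ) : ℂ)^2 := by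
    rw [← Complex.ofReal_pow, Real.sq_sqrt ht.le]
  have he0 : cexp (θ * I) ≠ 0 := Complex.exp_ne_zero _
  have he' : starRingEnd ℂ (cexp (θ * I)) = (cexp (θ * I))⁻¹ := by
    rw [← Complex.inv_eq_conj]
    simp [Complex.norm_exp]
  have hβ1' : ∀ i, starRingEnd ℂ (β1 i) = (β1 i)⁻¹ := fun i => (Complex.inv_eq_conj (hβ1 i)).symm
  have hγ1' : ∀ i, starRingEnd ℂ (γ1 i) = (γ1 i)⁻¹ := fun i => (Complex.inv_eq_conj (hγ1 i)).symm
  have hβ2' : ∀ i, starRingEnd ℂ (β2 i) = (β2 i)⁻¹ := fun i => (Complex.inv_eq_conj (hβ2 i)).symm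
  have hβ3' : ∀ i, starRingEnd ℂ (β3 i) = (β3 i)⁻¹ := fun i => (Complex.inv_eq_conj (hβ3 i)).symm
  have hβ4' : ∀ i, starRingEnd ℂ (β4 i) = (β4 i)⁻¹ := fun i => (Complex.inv_eq_conj (hβ4 i)).symm
  have hβ1n : ∀ i, β1 i ≠ 0 := fun i => by intro h; have := hβ1 i; rw [h] at this; simp at this
  have hγ1n : ∀ i, γ1 i ≠ 0 := fun i => by intro h; have := hγ1 i; rw [h] at this; simp at this
  have hβ2n : ∀ i, β2 i ≠ 0 := fun i => by intro h; have := hβ2 i; rw [h] at this; simp at this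
  have hβ3n : ∀ i, β3 i ≠ 0 := fun i => by intro h; have := hβ3 i; rw [h] at this; simp at this
  have hβ4n : ∀ i, β4 i ≠ 0 := fun i => by intro h; have := hβ4 i; rw [h] at this; simp at this
  have H := fun (j k : Fin 9) => congrFun (congrFun hdec j) k
  have h00 := H 0 0
  have h33 := H 3 3
  have h55 := H 5 5
  have h66 := H 6 6
  have h01 := H 0 1
  have h02 := H 0 2
  have h03 := H 0 3
  have h06 := H 0 6
  have h12 := H 1 2
  have h47 := H 4 7
  clear H hdec
  simp only [rank1_apply, Matrix.sum_apply, Matrix.add_apply, Matrix.smul_apply, smul_eq_mul,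
    rho0_00, rho0_33, rho0_55, rho0_66, rho0_01, rho0_02, rho0_03, rho0_06, rho0_12, rho0_47,
    z1_a0, z1_a1, z1_a2, z1_a3, z1_a4, z1_a5, z1_a6, z1_a7, z1_a8,
    z2_a0, z2_a1, z2_a2, z2_a3, z2_a4, z2_a5, z2_a6, z2_a7, z2_a8,
    z3_a0, z3_a1, z3_a2, z3_a3, z3_a4, z3_a5, z3_a6, z3_a7, z3_a8,
    z4_a0, z4_a1, z4_a2, z4_a3, z4_a4, z4_a5, z4_a6, z4_a7, z4_a8,
    _root_.map_mul, _root_.map_one, _root_.map_zero, conj_conj, Complex.conj_ofReal, map_inv₀, inv_inv, _root_.map_pow,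
    mul_zero, zero_mul, mul_one, one_mul, Finset.sum_const_zero, add_zero, zero_add,
    he', hβ1', hγ1', hβ2', hβ3', hβ4', hts]
    at h00 h33 h55 h66 h01 h02 h03 h06 h12 h47


  set s : ℂ := ((Real.sqrt t : ℝ) : ℂ) with hsdef
  set e : ℂ := cexp (θ * I) with hedef
  have E3a : ∀ x : Fin n₃, (↑(t3 x) / (s^2)^2 * (s^2 * e * (s^2 * e⁻¹)) : ℂ) = ↑(t3 x) := by
    intro x; field_simp
    all_goals try left
    all_goals ring
  have E4a : ∀ x : Fin n₄, (↑(t4 x) / (s^2)^2 *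
      (s * β4 x * (s * (β4 x)⁻¹) * (s * (β4 x)⁻¹ * (s * β4 x))) : ℂ) = ↑(t4 x) := by
    intro x; have := hβ4n x; field_simp
    all_goals try left
    all_goals ring
  have E1b : ∀ x : Fin n₁, (↑(t1 x) * (β1 x * (β1 x)⁻¹) : ℂ) = ↑(t1 x) := by
    intro x; have := hβ1n x; field_simp
    all_goals try left
    all_goals ring
  have E1d : ∀ x : Fin n₁, (↑(t1 x) * (γ1 x * (γ1 x)⁻¹) : ℂ) = ↑(t1 x) := by
    intro x; have := hγ1n x; field_simp
    all_goals try left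
    all_goals ring
  have E4b : ∀ x : Fin n₄, (↑(t4 x) / (s^2)^2 * (s * (β4 x)⁻¹ * (s * β4 x)) : ℂ)
      = (s^2)⁻¹ * ↑(t4 x) := by
    intro x; have := hβ4n x; field_simp
    all_goals try left
    all_goals ring
  have E1c : ∀ x : Fin n₁, (↑(t1 x) * (β1 x * (γ1 x)⁻¹ * ((β1 x)⁻¹ * γ1 x)) : ℂ) = ↑(t1 x) := by
    intro x; have := hβ1n x; have := hγ1n x; field_simp
    all_goals try left
    all_goals ring
  have E2c : ∀ x : Fin n₂, (↑(t2 x) / (s^2)^2 *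
      (s * β2 x * (s^2 * e) * (s * (β2 x)⁻¹ * (s^2 * e⁻¹))) : ℂ) = s^2 * ↑(t2 x) := by
    intro x; have := hβ2n x; field_simp
    all_goals try left
    all_goals ring
  have E3d : ∀ x : Fin n₃, (↑(t3 x) / (s^2)^2 *
      (s * β3 x * (s^2 * e) * (s * (β3 x)⁻¹ * (s^2 * e⁻¹))) : ℂ) = s^2 * ↑(t3 x) := by
    intro x; have := hβ3n x; field_simp
    all_goals try left
    all_goals ring
  have E4e : ∀ x : Fin n₄, (↑(t4 x) / (s^2)^2 *
      (s * β4 x * (s * (β4 x)⁻¹) * (s * (β4 x)⁻¹ * (s^2 * e⁻¹))) : ℂ)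
      = s * e⁻¹ * (↑(t4 x) * (β4 x)⁻¹) := by
    intro x; have := hβ4n x; field_simp
    all_goals try left
    all_goals ring
  have E3f : ∀ x : Fin n₃, (↑(t3 x) / (s^2)^2 * (s^2 * e * (s * β3 x)) : ℂ)
      = s⁻¹ * e * (↑(t3 x) * β3 x) := by
    intro x; field_simp
    all_goals try left
    all_goals ring
  have E4g : ∀ x : Fin n₄, (↑(t4 x) / (s^2)^2 * (s * β4 x * (s * (β4 x)⁻¹) * (s * β4 x)) : ℂ)
      = s⁻¹ * (↑(t4 x) * β4 x) := by
    intro x; have := hβ4n x; field_simp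
    all_goals try left
    all_goals ring
  have E3h : ∀ x : Fin n₃, (↑(t3 x) / (s^2)^2 * (s^2 * e * (s * (β3 x)⁻¹ * (s^2 * e⁻¹))) : ℂ)
      = s * (↑(t3 x) * (β3 x)⁻¹) := by
    intro x; have := hβ3n x; field_simp
    all_goals try left
    all_goals ring
  have E1i : ∀ x : Fin n₁, (↑(t1 x) * (β1 x * (β1 x)⁻¹ * ((γ1 x)⁻¹ * β1 x)) : ℂ)
      = ↑(t1 x) * ((γ1 x)⁻¹ * β1 x) := by
    intro x; have := hβ1n x; field_simp
    all_goals try left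
    all_goals ring
  have E2j : ∀ x : Fin n₂, (↑(t2 x) / (s^2)^2 * (s * β2 x * (s * (β2 x)⁻¹) * (s * β2 x)) : ℂ)
      = s⁻¹ * (↑(t2 x) * β2 x) := by
    intro x; have := hβ2n x; field_simp
    all_goals try left
    all_goals ring
  simp only [E3a, E4a, E1b, E1d, E4b, E1c, E2c, E3d, E4e, E3f, E4g, E3h, E1i, E2j,
    ← Finset.mul_sum] at h00 h33 h55 h66 h01 h02 h03 h06 h47


  -- name the sums
  set S1 : ℂ := ∑ x : Fin n₁, ((t1 x : ℝ) : ℂ) with hS1def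
  set S2 : ℂ := ∑ x : Fin n₂, ((t2 x : ℝ) : ℂ) with hS2def
  set S3 : ℂ := ∑ x : Fin n₃, ((t3 x : ℝ) : ℂ) with hS3def
  set S4 : ℂ := ∑ x : Fin n₄, ((t4 x : ℝ) : ℂ) with hS4def
  set B1 : ℂ := ∑ x : Fin n₁, ((t1 x : ℝ) : ℂ) * β1 x with hB1def
  set C1 : ℂ := ∑ x : Fin n₁, ((t1 x : ℝ) : ℂ) * γ1 x with hC1def
  set D1 : ℂ := ∑ x : Fin n₁, ((t1 x : ℝ) : ℂ) * (β1 x)⁻¹ with hD1def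
  set E1 : ℂ := ∑ x : Fin n₁, ((t1 x : ℝ) : ℂ) * (γ1 x)⁻¹ with hE1def
  set B2 : ℂ := ∑ x : Fin n₂, ((t2 x : ℝ) : ℂ) * β2 x with hB2def
  set B3 : ℂ := ∑ x : Fin n₃, ((t3 x : ℝ) : ℂ) * β3 x with hB3def
  set D3 : ℂ := ∑ x : Fin n₃, ((t3 x : ℝ) : ℂ) * (β3 x)⁻¹ with hD3def
  set B4 : ℂ := ∑ x : Fin n₄, ((t4 x : ℝ) : ℂ) * β4 x with hB4def
  set D4 : ℂ := ∑ x : Fin n₄, ((t4 x : ℝ) : ℂ) * (β4 x)⁻¹ with hD4def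
  set M : ℂ := ∑ x : Fin n₁, ((t1 x : ℝ) : ℂ) * ((β1 x)⁻¹ * γ1 x) with hMdef
  set M' : ℂ := ∑ x : Fin n₁, ((t1 x : ℝ) : ℂ) * ((γ1 x)⁻¹ * β1 x) with hM'def
  field_simp at h33 h01 h02 h03 h06 h47


  -- solve for the weight sums
  have hq : ((s:ℂ)^4 - s^2 + 1) = (((t^2 - t + 1 : ℝ)) : ℂ) := by
    rw [show (s:ℂ)^4 = (s^2)^2 by ring, ← hts]
    push_cast
    ring
  have hqne : ((s:ℂ)^4 - s^2 + 1) ≠ 0 := by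
    rw [hq]
    exact_mod_cast (by nlinarith [sq_nonneg (t - 1)] : (t^2 - t + 1 : ℝ) ≠ 0)
  have hS1v : S1 = 1 := by
    have key : ((s:ℂ)^4 - s^2 + 1) * (S1 - 1) = 0 := by
      linear_combination s^2 * h00 - s^2 * h33 - h66
    exact sub_eq_zero.mp ((mul_eq_zero.mp key).resolve_left hqne)
  have hs2ne : (s:ℂ)^2 ≠ 0 := pow_ne_zero 2 hs0
  have hS4v : S4 = 1 := by linear_combination -h33 - s^2 * hS1v
  have hS3v : S3 = 1 := by
    apply mul_left_cancel₀ hs2ne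
    linear_combination -h66 - hS1v
  have hS2v : S2 = 1 := by
    apply mul_left_cancel₀ hs2ne
    linear_combination -h55 - hS1v
  -- the key non-degeneracy fact : s^2 ≠ e
  have hse : (s:ℂ)^2 - e ≠ 0 := by
    intro h
    have h1 : (t:ℂ) = e := by rw [hts]; linear_combination h
    have habs : ‖((t:ℂ))‖ = 1 := by
      rw [h1, hedef]
      exact Complex.norm_exp_ofReal_mul_I θ
    have ht1 : t = 1 := by
      rwa [Complex.norm_real, Real.norm_eq_abs, abs_of_pos ht] at habs
    have he1 : cexp ((θ:ℂ) * I) = 1 := by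
      rw [← hedef, ← h1, ht1]
      norm_num
    obtain ⟨n, hn⟩ := Complex.exp_eq_one_iff.mp he1
    have h2 : (θ:ℂ) = ((n * (2 * Real.pi) : ℝ) : ℂ) := by
      apply mul_right_cancel₀ Complex.I_ne_zero
      rw [hn]
      push_cast
      ring
    have h3 : θ = n * (2 * Real.pi) := by exact_mod_cast h2
    have hn0 : n = 0 := by
      by_contra hn0
      have h4 : (1:ℝ) ≤ |(n:ℝ)| := by exact_mod_cast Int.one_le_abs (by exact_mod_cast hn0)
      have h5 : |θ| < Real.pi / 3 := abs_lt.mpr ⟨hθl, hθr⟩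
      have h6 : |θ| = |(n:ℝ)| * (2 * Real.pi) := by
        rw [h3, abs_mul, abs_of_pos (by positivity : (0:ℝ) < 2 * Real.pi)]
      nlinarith [Real.pi_pos]
    exact hne ⟨by rw [h3, hn0]; norm_num, ht1⟩
  -- conjugation lemmas
  have hcs : starRingEnd ℂ s = s := by rw [hsdef]; exact Complex.conj_ofReal _
  have cE1 : starRingEnd ℂ E1 = C1 := by
    rw [hE1def, hC1def, map_sum]
    refine Finset.sum_congr rfl fun x _ => ?_
    rw [_root_.map_mul, Complex.conj_ofReal, map_inv₀, hγ1' x, inv_inv]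
  have cD3 : starRingEnd ℂ D3 = B3 := by
    rw [hD3def, hB3def, map_sum]
    refine Finset.sum_congr rfl fun x _ => ?_
    rw [_root_.map_mul, Complex.conj_ofReal, map_inv₀, hβ3' x, inv_inv]
  have cD1 : starRingEnd ℂ D1 = B1 := by
    rw [hD1def, hB1def, map_sum]
    refine Finset.sum_congr rfl fun x _ => ?_
    rw [_root_.map_mul, Complex.conj_ofReal, map_inv₀, hβ1' x, inv_inv]
  have cB4 : starRingEnd ℂ B4 = D4 := by
    rw [hB4def, hD4def, map_sum]
    refine Finset.sum_congr rfl fun x _ => ?_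
    rw [_root_.map_mul, Complex.conj_ofReal, hβ4' x]
  have cM : starRingEnd ℂ M = M' := by
    rw [hMdef, hM'def, map_sum]
    refine Finset.sum_congr rfl fun x _ => ?_
    rw [_root_.map_mul, _root_.map_mul, Complex.conj_ofReal, map_inv₀, hβ1' x, hγ1' x, inv_inv]
    ring
  -- vanishing of first moments
  have h06' : (0:ℂ) = C1 + s * B3 := by
    have h := congrArg (starRingEnd ℂ) h06
    rwa [map_zero, map_add, _root_.map_mul, hcs, cE1, cD3] at h
  have hB3z : B3 = 0 := by
    have key3 : ((s:ℂ)^2 - e) * B3 = 0 := by linear_combination h02 - s * h06'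
    exact (mul_eq_zero.mp key3).resolve_left hse
  have hC1z : C1 = 0 := by linear_combination -h06' - s * hB3z
  have h03' : (0:ℂ) = B1 * s + D4 := by
    have h := congrArg (starRingEnd ℂ) h03
    rw [mul_zero, map_zero, map_add, _root_.map_mul, hcs, cD1, cB4] at h
    linear_combination h
  have hD4z : D4 = 0 := by
    have key4 : ((s:ℂ)^2 - e) * D4 = 0 := by linear_combination e * h03' - s * h01
    exact (mul_eq_zero.mp key4).resolve_left hse
  have hB1z : B1 = 0 := by
    have h : B1 * e = 0 := by linear_combination -h01 - s * hD4z
    exact (mul_eq_zero.mp h).resolve_right he0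
  have hD1z : D1 = 0 := by
    have h := congrArg (starRingEnd ℂ) cD1
    rw [conj_conj, hB1z, map_zero] at h
    exact h
  have hB4z : B4 = 0 := by linear_combination -h03 - s * hD1z
  have hMz : M = 0 := h12.symm
  have hM'z : M' = 0 := by rw [← cM, hMz, map_zero]
  have hB2z : B2 = 0 := by linear_combination -h47 - s * hM'z
  -- real weight sums
  have ha1 : ∑ i, t1 i = 1 := by
    have : ((∑ i, t1 i : ℝ) : ℂ) = 1 := by push_cast; rw [← hS1def]; exact hS1v
    exact_mod_cast this
  have ha2 : ∑ i, t2 i = 1 := by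
    have : ((∑ i, t2 i : ℝ) : ℂ) = 1 := by push_cast; rw [← hS2def]; exact hS2v
    exact_mod_cast this
  have ha3 : ∑ i, t3 i = 1 := by
    have : ((∑ i, t3 i : ℝ) : ℂ) = 1 := by push_cast; rw [← hS3def]; exact hS3v
    exact_mod_cast this
  have ha4 : ∑ i, t4 i = 1 := by
    have : ((∑ i, t4 i : ℝ) : ℂ) = 1 := by push_cast; rw [← hS4def]; exact hS4v
    exact_mod_cast this
  refine ⟨ha1, ha2, ha3, ha4, hB1z, hC1z, hB2z, hB3z, hB4z, ?_, ?_, ?_, ?_⟩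
  · exact aux_three n₁ t1 β1 γ1 ht1 hβ1 hγ1 ha1 (by rw [← hB1def]; exact hB1z)
      (by rw [← hC1def]; exact hC1z) (by rw [← hMdef]; exact hMz)
  · exact aux_two n₂ t2 β2 ht2 hβ2 ha2 (by rw [← hB2def]; exact hB2z)
  · exact aux_two n₃ t3 β3 ht3 hβ3 ha3 (by rw [← hB3def]; exact hB3z)
  · exact aux_two n₄ t4 β4 ht4 hβ4 ha4 (by rw [← hB4def]; exact hB4z)
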